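/- Consider the 8-dimensional parametrization p̄ of a two-party, two-input, two-output non-signalling distribution by (P₁(1|0), P₁(1|1), P₂(1|0), P₂(1|1), P(1,1|0,0), P(1,1|1,0), P(1,1|0,1), P(1,1|1,1)). For the Bell functional B(p̄) = b̄·p̄ with b̄ = (−30/31, 167/9, 167/9, −30/31, −174/11, −244/23, 74/11, −174/11): for all quantum distributions of the form generated by projectors E₁ = |1⟩⟨1|⊗1, E₁' = |ψ₁⟩⟨ψ₁|⊗1, E₂ = 1⊗|1⟩⟨1|, E₂' = 1⊗|ψ₂⟩⟨ψ₂| on ℂ²⊗ℂ² with |ψ_i⟩ = cos θ_i|0⟩ + sin θ_i|1⟩ and any two-qubit state, B(p̄) > −1; equivalently, the 4×4 Bell operator M(θ₁,θ₂) + 1₄ is positive definite for all θ₁, θ₂ ∈ [0,2π). -/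

import Mathlib

open Kronecker
open scoped ComplexOrder

/-- The projector `|1⟩⟨1|` on ℂ². -/
noncomputable def ketOneProj : Matrix (Fin 2) (Fin 2) ℂ := !![0, 0; 0, 1]

/-- The projector `|ψ⟩⟨ψ|` with `|ψ⟩ = cos θ |0⟩ + sin θ |1⟩`. -/
noncomputable def psiProj (θ : ℝ) : Matrix (Fin 2) (Fin 2) ℂ :=
  !![(Real.cos θ : ℂ) ^ 2, (Real.cos θ : ℂ) * (Real.sin θ : ℂ);
     (Real.cos θ : ℂ) * (Real.sin θ : ℂ), (Real.sin θ : ℂ) ^ 2]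

/-- Alice's measurement projectors `E₁ = |1⟩⟨1| ⊗ 1`, `E₁' = |ψ₁⟩⟨ψ₁| ⊗ 1`. -/
noncomputable def E1 : Matrix (Fin 2 × Fin 2) (Fin 2 × Fin 2) ℂ := ketOneProj ⊗ₖ 1
noncomputable def E1' (θ : ℝ) : Matrix (Fin 2 × Fin 2) (Fin 2 × Fin 2) ℂ := psiProj θ ⊗ₖ 1

/-- Bob's measurement projectors `E₂ = 1 ⊗ |1⟩⟨1|`, `E₂' = 1 ⊗ |ψ₂⟩⟨ψ₂|`. -/
noncomputable def E2 : Matrix (Fin 2 × Fin 2) (Fin 2 × Fin 2) ℂ :=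
  (1 : Matrix (Fin 2) (Fin 2) ℂ) ⊗ₖ ketOneProj
noncomputable def E2' (θ : ℝ) : Matrix (Fin 2 × Fin 2) (Fin 2 × Fin 2) ℂ :=
  (1 : Matrix (Fin 2) (Fin 2) ℂ) ⊗ₖ psiProj θ

/-- The Bell operator `M(θ₁,θ₂) = b̄ · (E₁, E₁', E₂, E₂', E₁E₂, E₁'E₂, E₁E₂', E₁'E₂')`
with `b̄ = (−30/31, 167/9, 167/9, −30/31, −174/11, −244/23, 74/11, −174/11)`. -/
noncomputable def BellOp (θ₁ θ₂ : ℝ) : Matrix (Fin 2 × Fin 2) (Fin 2 × Fin 2) ℂ :=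
  (-30/31 : ℂ) • E1 + (167/9 : ℂ) • E1' θ₁ + (167/9 : ℂ) • E2 + (-30/31 : ℂ) • E2' θ₂ +
    (-174/11 : ℂ) • (E1 * E2) + (-244/23 : ℂ) • (E1' θ₁ * E2) +
    (74/11 : ℂ) • (E1 * E2' θ₂) + (-174/11 : ℂ) • (E1' θ₁ * E2' θ₂)

set_option maxHeartbeats 2000000
open Matrix

lemma chain_core (d1 H11 K22 J Q h k L1 L2 L3 x0 x1 x2 x3 b1 b2 b3 f2 f3 e3 : ℝ)
    (hd1 : 0 < d1) (hH11 : 0 < H11) (hK22 : 0 < K22) (hJ : 0 < J)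
    (I1 : d1 * Q = L1^2 + h) (I2 : H11 * h = L2^2 + k) (I3 : K22 * k = L3^2 + J * x3^2)
    (eL1 : L1 = d1*x0 + b1*x1 + b2*x2 + b3*x3)
    (eL2 : L2 = H11*x1 + f2*x2 + f3*x3)
    (eL3 : L3 = K22*x2 + e3*x3)
    (hh0 : x1 = 0 → x2 = 0 → x3 = 0 → h = 0)
    (hk0 : x2 = 0 → x3 = 0 → k = 0)
    (hQ : Q ≤ 0) :
    x0 = 0 ∧ x1 = 0 ∧ x2 = 0 ∧ x3 = 0 := by
  have hle : d1 * Q ≤ 0 := mul_nonpos_of_nonneg_of_nonpos hd1.le hQ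
  have hh : h ≤ 0 := by nlinarith [sq_nonneg L1]
  have hhle : H11 * h ≤ 0 := mul_nonpos_of_nonneg_of_nonpos hH11.le hh
  have hk : k ≤ 0 := by nlinarith [sq_nonneg L2]
  have hkle : K22 * k ≤ 0 := mul_nonpos_of_nonneg_of_nonpos hK22.le hk
  have hx3 : x3 = 0 := by
    have h1 : J * x3^2 ≤ 0 := by nlinarith [sq_nonneg L3]
    have := sq_nonneg x3
    have h2 : x3^2 = 0 := by nlinarith
    exact pow_eq_zero_iff (n := 2) (by norm_num) |>.mp h2
  have hx2 : x2 = 0 := by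
    have h1 : L3^2 ≤ 0 := by nlinarith [sq_nonneg x3]
    have h2 : L3 = 0 := by nlinarith [sq_nonneg L3]
    rw [eL3, hx3] at h2
    have : K22 * x2 = 0 := by linarith
    rcases mul_eq_zero.mp this with h | h
    · exact absurd h hK22.ne'
    · exact h
  have hkz : k = 0 := hk0 hx2 hx3
  have hx1 : x1 = 0 := by
    have h2 : L2 = 0 := by nlinarith [sq_nonneg L2]
    rw [eL2, hx2, hx3] at h2
    have : H11 * x1 = 0 := by linarith
    rcases mul_eq_zero.mp this with h | h
    · exact absurd h hH11.ne'
    · exact h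
  have hhz : h = 0 := hh0 hx1 hx2 hx3
  have hx0 : x0 = 0 := by
    have h2 : L1 = 0 := by nlinarith [sq_nonneg L1]
    rw [eL1, hx1, hx2, hx3] at h2
    have : d1 * x0 = 0 := by linarith
    rcases mul_eq_zero.mp this with h | h
    · exact absurd h hd1.ne'
    · exact h
  exact ⟨hx0, hx1, hx2, hx3⟩

/-- Generic Sylvester-style positivity for a symmetric 4×4 real quadratic form. -/
lemma posdef4 (g00 g01 g02 g03 g11 g12 g13 g22 g23 g33 x0 x1 x2 x3 : ℝ)
    (hd1 : 0 < g00)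
    (hd2 : 0 < g00*g11 - g01^2)
    (hd3 : 0 < g00*(g11*g22 - g12^2) - g01*(g01*g22 - g12*g02) + g02*(g01*g12 - g11*g02))
    (hd4 : 0 < g00*(g11*(g22*g33-g23^2) - g12*(g12*g33-g23*g13) + g13*(g12*g23-g22*g13))
            - g01*(g01*(g22*g33-g23^2) - g12*(g02*g33-g23*g03) + g13*(g02*g23-g22*g03))
            + g02*(g01*(g12*g33-g23*g13) - g11*(g02*g33-g23*g03) + g13*(g02*g13-g12*g03))
            - g03*(g01*(g12*g23-g22*g13) - g11*(g02*g23-g22*g03) + g12*(g02*g13-g12*g03)))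
    (hx : ¬(x0 = 0 ∧ x1 = 0 ∧ x2 = 0 ∧ x3 = 0)) :
    0 < g00*x0^2 + g11*x1^2 + g22*x2^2 + g33*x3^2
        + 2*(g01*x0*x1 + g02*x0*x2 + g03*x0*x3 + g12*x1*x2 + g13*x1*x3 + g23*x2*x3) := by
  by_contra hQ
  push_neg at hQ
  refine hx ?_
  refine chain_core g00 (g00*g11 - g01*g01) ((g00*g11 - g01*g01)*(g00*g22 - g02*g02) - (g00*g12 - g01*g02)*(g00*g12 - g01*g02))
    (((g00*g11 - g01*g01)*(g00*g22 - g02*g02) - (g00*g12 - g01*g02)*(g00*g12 - g01*g02)) *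
      ((g00*g11 - g01*g01)*(g00*g33 - g03*g03) - (g00*g13 - g01*g03)*(g00*g13 - g01*g03)) -
      ((g00*g11 - g01*g01)*(g00*g23 - g02*g03) - (g00*g12 - g01*g02)*(g00*g13 - g01*g03))^2)
    _
    ((g00*g11 - g01*g01)*x1^2 + (g00*g22 - g02*g02)*x2^2 + (g00*g33 - g03*g03)*x3^2
      + 2*((g00*g12 - g01*g02)*x1*x2 + (g00*g13 - g01*g03)*x1*x3 + (g00*g23 - g02*g03)*x2*x3))
    (((g00*g11 - g01*g01)*(g00*g22 - g02*g02) - (g00*g12 - g01*g02)*(g00*g12 - g01*g02))*x2^2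
      + ((g00*g11 - g01*g01)*(g00*g33 - g03*g03) - (g00*g13 - g01*g03)*(g00*g13 - g01*g03))*x3^2
      + 2*(((g00*g11 - g01*g01)*(g00*g23 - g02*g03) - (g00*g12 - g01*g02)*(g00*g13 - g01*g03))*x2*x3))
    (g00*x0 + g01*x1 + g02*x2 + g03*x3)
    ((g00*g11 - g01*g01)*x1 + (g00*g12 - g01*g02)*x2 + (g00*g13 - g01*g03)*x3)
    (((g00*g11 - g01*g01)*(g00*g22 - g02*g02) - (g00*g12 - g01*g02)*(g00*g12 - g01*g02))*x2
      + ((g00*g11 - g01*g01)*(g00*g23 - g02*g03) - (g00*g12 - g01*g02)*(g00*g13 - g01*g03))*x3)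
    x0 x1 x2 x3 g01 g02 g03 (g00*g12 - g01*g02) (g00*g13 - g01*g03)
    ((g00*g11 - g01*g01)*(g00*g23 - g02*g03) - (g00*g12 - g01*g02)*(g00*g13 - g01*g03))
    hd1 (by nlinarith [hd2]) ?_ ?_ ?_ ?_ ?_ rfl rfl rfl ?_ ?_ hQ
  · -- K22 > 0 : K22 = g00 * d3
    have h : (g00*g11 - g01*g01)*(g00*g22 - g02*g02) - (g00*g12 - g01*g02)*(g00*g12 - g01*g02)
        = g00 * (g00*(g11*g22 - g12^2) - g01*(g01*g22 - g12*g02) + g02*(g01*g12 - g11*g02)) := by ring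
    rw [h]; positivity
  · -- J > 0 : J = g00^2 * d2 * d4
    have h : ((g00*g11 - g01*g01)*(g00*g22 - g02*g02) - (g00*g12 - g01*g02)*(g00*g12 - g01*g02)) *
      ((g00*g11 - g01*g01)*(g00*g33 - g03*g03) - (g00*g13 - g01*g03)*(g00*g13 - g01*g03)) -
      ((g00*g11 - g01*g01)*(g00*g23 - g02*g03) - (g00*g12 - g01*g02)*(g00*g13 - g01*g03))^2
      = g00^2 * (g00*g11 - g01^2) *
        (g00*(g11*(g22*g33-g23^2) - g12*(g12*g33-g23*g13) + g13*(g12*g23-g22*g13))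
            - g01*(g01*(g22*g33-g23^2) - g12*(g02*g33-g23*g03) + g13*(g02*g23-g22*g03))
            + g02*(g01*(g12*g33-g23*g13) - g11*(g02*g33-g23*g03) + g13*(g02*g13-g12*g03))
            - g03*(g01*(g12*g23-g22*g13) - g11*(g02*g23-g22*g03) + g12*(g02*g13-g12*g03))) := by ring
    rw [h]; positivity
  · ring
  · ring
  · ring
  · intro h1 h2 h3; rw [h1, h2, h3]; ring
  · intro h2 h3; rw [h2, h3]; ring

lemma red1 (a b : ℝ) (ha0 : 0 ≤ a) (ha1 : a ≤ 1) (hb0 : 0 ≤ b) (hb1 : b ≤ 1) :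
    0 < (1) + (-30/31)*b + (167/9)*a + (-174/11)*a*b := by
  nlinarith [mul_nonneg ha0 hb0, mul_nonneg ha0 (sub_nonneg.mpr hb1), mul_nonneg (sub_nonneg.mpr ha1) hb0, mul_nonneg (sub_nonneg.mpr ha1) (sub_nonneg.mpr hb1)]

lemma red2 (a b : ℝ) (ha0 : 0 ≤ a) (ha1 : a ≤ 1) (hb0 : 0 ≤ b) (hb1 : b ≤ 1) :
    0 < (5186/279) + (-1670/93)*b + (214113169/635283)*a + (-6664558/23529)*a*b + (-2993141/20493)*a^2 + (42456/253)*a^2*b := by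
  nlinarith [mul_nonneg ha0 hb0, mul_nonneg ha0 (sub_nonneg.mpr hb1), mul_nonneg (sub_nonneg.mpr ha1) hb0, mul_nonneg (sub_nonneg.mpr ha1) (sub_nonneg.mpr hb1), mul_nonneg (mul_nonneg ha0 ha0) hb0, mul_nonneg (mul_nonneg ha0 ha0) (sub_nonneg.mpr hb1), mul_nonneg (mul_nonneg ha0 (sub_nonneg.mpr ha1)) hb0, mul_nonneg (mul_nonneg ha0 (sub_nonneg.mpr ha1)) (sub_nonneg.mpr hb1)]

lemma red3 (a b : ℝ) (ha0 : 0 ≤ a) (ha1 : a ≤ 1) (hb0 : 0 ≤ b) (hb1 : b ≤ 1) :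
    0 < (26894596/77841) + (-148630760/285417)*b + (5728100/31713)*b^2 + (-9454819598/19693773)*a + (621388913654/216631503)*a*b + (-16671185492/8023389)*a*b^2 + (29931410/211761)*a^2 + (-8001114334/6988113)*a^2*b + (3141744/2783)*a^2*b^2 := by
  nlinarith [mul_nonneg ha0 hb0, mul_nonneg ha0 (sub_nonneg.mpr hb1), mul_nonneg (sub_nonneg.mpr ha1) hb0, mul_nonneg (sub_nonneg.mpr ha1) (sub_nonneg.mpr hb1), mul_nonneg (mul_nonneg ha0 ha0) (mul_nonneg hb0 hb0), mul_nonneg (mul_nonneg ha0 hb0) (mul_nonneg (sub_nonneg.mpr ha1) (sub_nonneg.mpr hb1)), mul_nonneg (mul_nonneg ha0 ha0) (mul_nonneg hb0 (sub_nonneg.mpr hb1)), mul_nonneg (mul_nonneg ha0 (sub_nonneg.mpr ha1)) (mul_nonneg hb0 hb0), mul_nonneg (mul_nonneg ha0 (sub_nonneg.mpr ha1)) (mul_nonneg hb0 (sub_nonneg.mpr hb1)), sq_nonneg (a-b), sq_nonneg (a+b-1)]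

lemma red4 (a b : ℝ) (ha0 : 0 ≤ a) (ha1 : a ≤ 1) (hb0 : 0 ≤ b) (hb1 : b ≤ 1) :
    0 < (1248850565260/5494562667) + (25225984008520/20146729779)*b + (-102664736300/72210501)*b^2 + (25225984008520/20146729779)*a + (-10079437772720204/664842082707)*a*b + (13643055839092/794315511)*a*b^2 + (-102664736300/72210501)*a^2 + (13643055839092/794315511)*a^2*b + (-546663456/30613)*a^2*b^2 := by
  nlinarith [mul_nonneg ha0 hb0, mul_nonneg ha0 (sub_nonneg.mpr hb1), mul_nonneg (sub_nonneg.mpr ha1) hb0, mul_nonneg (sub_nonneg.mpr ha1) (sub_nonneg.mpr hb1), mul_nonneg (mul_nonneg ha0 ha0) (mul_nonneg hb0 hb0), mul_nonneg (mul_nonneg ha0 hb0) (mul_nonneg (sub_nonneg.mpr ha1) (sub_nonneg.mpr hb1)), mul_nonneg (mul_nonneg ha0 ha0) (mul_nonneg hb0 (sub_nonneg.mpr hb1)), mul_nonneg (mul_nonneg ha0 (sub_nonneg.mpr ha1)) (mul_nonneg hb0 hb0), mul_nonneg (mul_nonneg ha0 (sub_nonneg.mpr ha1)) (mul_nonneg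 hb0 (sub_nonneg.mpr hb1)), sq_nonneg (a-b), sq_nonneg (a+b-1)]
lemma qform_pos (c1 s1 c2 s2 x0 x1 x2 x3 : ℝ) (h1 : c1^2 + s1^2 = 1) (h2 : c2^2 + s2^2 = 1)
    (hx : ¬(x0 = 0 ∧ x1 = 0 ∧ x2 = 0 ∧ x3 = 0)) :
    0 < ((1) + (-30/31)*c2^2 + (167/9)*c1^2 + (-174/11)*c1^2*c2^2)*x0^2 + ((176/9) + (-30/31)*s2^2 + (1645/207)*c1^2 + (-174/11)*c1^2*s2^2)*x1^2 + ((1/31) + (1964/341)*c2^2 + (167/9)*s1^2 + (-174/11)*s1^2*c2^2)*x2^2 + ((8500/3069) + (1964/341)*s2^2 + (1645/207)*s1^2 + (-174/11)*s1^2*s2^2)*x3^2 + 2*(((-30/31)*c2*s2 + (-174/11)*c1^2*c2*s2)*x0*x1 + ((167/9)*c1*s1 + (-174/11)*c1*s1*c2^2)*x0*x2 + ((-174/11)*c1*s1*c2*s2)*x0*x3 + ((-174/11)*c1*s1*c2*s2)*x1*x2 + ((1645/207)*c1*s1 + (-174/11)*c1*s1*s2^2)*x1*x3 + ((1964/341)*c2*s2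 + (-174/11)*s1^2*c2*s2)*x2*x3) := by
  have ha0 : (0:ℝ) ≤ c1^2 := sq_nonneg c1
  have ha1 : c1^2 ≤ 1 := by nlinarith [sq_nonneg s1]
  have hb0 : (0:ℝ) ≤ c2^2 := sq_nonneg c2
  have hb1 : c2^2 ≤ 1 := by nlinarith [sq_nonneg s2]
  refine posdef4 _ _ _ _ _ _ _ _ _ _ x0 x1 x2 x3 ?_ ?_ ?_ ?_ hx
  · have e : ((1) + (-30/31)*c2^2 + (167/9)*c1^2 + (-174/11)*c1^2*c2^2) = (1) + (-30/31)*(c2^2) + (167/9)*(c1^2) + (-174/11)*(c1^2)*(c2^2) := by linear_combination (0)*h1 + (0)*h2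
    rw [e]; exact red1 _ _ ha0 ha1 hb0 hb1
  · have e : ((1) + (-30/31)*c2^2 + (167/9)*c1^2 + (-174/11)*c1^2*c2^2)*((176/9) + (-30/31)*s2^2 + (1645/207)*c1^2 + (-174/11)*c1^2*s2^2) - ((-30/31)*c2*s2 + (-174/11)*c1^2*c2*s2)^2 = (5186/279) + (-1670/93)*(c2^2) + (214113169/635283)*(c1^2) + (-6664558/23529)*(c1^2)*(c2^2) + (-2993141/20493)*(c1^2)^2 + (42456/253)*(c1^2)^2*(c2^2) := by linear_combination (0)*h1 + ((-30/31) + (-34552/1023)*c1^2 + (-9686/33)*c1^4)*h2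
    rw [e]; exact red2 _ _ ha0 ha1 hb0 hb1
  · have e : ((1) + (-30/31)*c2^2 + (167/9)*c1^2 + (-174/11)*c1^2*c2^2)*(((176/9) + (-30/31)*s2^2 + (1645/207)*c1^2 + (-174/11)*c1^2*s2^2)*((1/31) + (1964/341)*c2^2 + (167/9)*s1^2 + (-174/11)*s1^2*c2^2) - ((-174/11)*c1*s1*c2*s2)^2) - ((-30/31)*c2*s2 + (-174/11)*c1^2*c2*s2)*(((-30/31)*c2*s2 + (-174/11)*c1^2*c2*s2)*((1/31) + (1964/341)*c2^2 + (167/9)*s1^2 + (-174/11)*s1^2*c2^2) - ((-174/11)*c1*s1*c2*s2)*((167/9)*c1*s1 + (-174/11)*c1*s1*c2^2)) + ((167/9)*c1*s1 + (-174/11)*c1*s1*c2^2)*(((-30/31)*c2*s2 + (-174/11)*c1^2*c2*s2)*((-174/11)*c1*s1*c2*s2) - ((176/9) + (-30/31)*s2^2 + (1645/207)*c1^2 + (-174/11)*c1^2*s2^2)*((167/9)*c1*s1 + (-174/11)*c1*s1*c2^2)) = (26894596/77841) + (-148630760/285417)*(c2^2) + (5728100/31713)*(c2^2)^2 + (-9454819598/19693773)*(c1^2)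 + (621388913654/216631503)*(c1^2)*(c2^2) + (-16671185492/8023389)*(c1^2)*(c2^2)^2 + (29931410/211761)*(c1^2)^2 + (-8001114334/6988113)*(c1^2)^2*(c2^2) + (3141744/2783)*(c1^2)^2*(c2^2)^2 := by linear_combination ((29392/81) + (-1670/93)*s2^2 + (-552832/837)*c2^2 + (5220/341)*c2^2*s2^2 + (9280/31)*c2^4 + (274715/1863)*c1^2 + (-9686/33)*c1^2*s2^2 + (-56838040/211761)*c1^2*c2^2 + (96860/341)*c1^2*c2^2*s2^2 + (954100/7843)*c1^2*c2^4)*h1 + ((-51860/2883) + (102900/10571)*c2^2 + (-8773328/31713)*c1^2 + (25887592/348843)*c1^2*c2^2 + (96860/341)*c1^4 + (-716764/363)*c1^4*c2^2)*h2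
    rw [e]; exact red3 _ _ ha0 ha1 hb0 hb1
  · have e : ((1) + (-30/31)*c2^2 + (167/9)*c1^2 + (-174/11)*c1^2*c2^2)*(((176/9) + (-30/31)*s2^2 + (1645/207)*c1^2 + (-174/11)*c1^2*s2^2)*(((1/31) + (1964/341)*c2^2 + (167/9)*s1^2 + (-174/11)*s1^2*c2^2)*((8500/3069) + (1964/341)*s2^2 + (1645/207)*s1^2 + (-174/11)*s1^2*s2^2)-((1964/341)*c2*s2 + (-174/11)*s1^2*c2*s2)^2) - ((-174/11)*c1*s1*c2*s2)*(((-174/11)*c1*s1*c2*s2)*((8500/3069) + (1964/341)*s2^2 + (1645/207)*s1^2 + (-174/11)*s1^2*s2^2)-((1964/341)*c2*s2 + (-174/11)*s1^2*c2*s2)*((1645/207)*c1*s1 + (-174/11)*c1*s1*s2^2)) + ((1645/207)*c1*s1 + (-174/11)*c1*s1*s2^2)*(((-174/11)*c1*s1*c2*s2)*((1964/341)*c2*s2 + (-174/11)*s1^2*c2*s2)-((1/31) + (1964/341)*c2^2 + (167/9)*s1^2 + (-174/11)*s1^2*c2^2)*((1645/207)*c1*s1 + (-174/11)*c1*s1*s2^2)))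 - ((-30/31)*c2*s2 + (-174/11)*c1^2*c2*s2)*(((-30/31)*c2*s2 + (-174/11)*c1^2*c2*s2)*(((1/31) + (1964/341)*c2^2 + (167/9)*s1^2 + (-174/11)*s1^2*c2^2)*((8500/3069) + (1964/341)*s2^2 + (1645/207)*s1^2 + (-174/11)*s1^2*s2^2)-((1964/341)*c2*s2 + (-174/11)*s1^2*c2*s2)^2) - ((-174/11)*c1*s1*c2*s2)*(((167/9)*c1*s1 + (-174/11)*c1*s1*c2^2)*((8500/3069) + (1964/341)*s2^2 + (1645/207)*s1^2 + (-174/11)*s1^2*s2^2)-((1964/341)*c2*s2 + (-174/11)*s1^2*c2*s2)*((-174/11)*c1*s1*c2*s2)) + ((1645/207)*c1*s1 + (-174/11)*c1*s1*s2^2)*(((167/9)*c1*s1 + (-174/11)*c1*s1*c2^2)*((1964/341)*c2*s2 + (-174/11)*s1^2*c2*s2)-((1/31) + (1964/341)*c2^2 + (167/9)*s1^2 + (-174/11)*s1^2*c2^2)*((-174/11)*c1*s1*c2*s2))) + ((167/9)*c1*s1 + (-174/11)*c1*s1*c2^2)*(((-30/31)*c2*s2 + (-174/11)*c1^2*c2*s2)*(((-174/11)*c1*s1*c2*s2)*((8500/3069)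 + (1964/341)*s2^2 + (1645/207)*s1^2 + (-174/11)*s1^2*s2^2)-((1964/341)*c2*s2 + (-174/11)*s1^2*c2*s2)*((1645/207)*c1*s1 + (-174/11)*c1*s1*s2^2)) - ((176/9) + (-30/31)*s2^2 + (1645/207)*c1^2 + (-174/11)*c1^2*s2^2)*(((167/9)*c1*s1 + (-174/11)*c1*s1*c2^2)*((8500/3069) + (1964/341)*s2^2 + (1645/207)*s1^2 + (-174/11)*s1^2*s2^2)-((1964/341)*c2*s2 + (-174/11)*s1^2*c2*s2)*((-174/11)*c1*s1*c2*s2)) + ((1645/207)*c1*s1 + (-174/11)*c1*s1*s2^2)*(((167/9)*c1*s1 + (-174/11)*c1*s1*c2^2)*((1645/207)*c1*s1 + (-174/11)*c1*s1*s2^2)-((-174/11)*c1*s1*c2*s2)*((-174/11)*c1*s1*c2*s2))) - ((-174/11)*c1*s1*c2*s2)*(((-30/31)*c2*s2 + (-174/11)*c1^2*c2*s2)*(((-174/11)*c1*s1*c2*s2)*((1964/341)*c2*s2 + (-174/11)*s1^2*c2*s2)-((1/31) + (1964/341)*c2^2 + (167/9)*s1^2 + (-174/11)*s1^2*c2^2)*((1645/207)*c1*s1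 + (-174/11)*c1*s1*s2^2)) - ((176/9) + (-30/31)*s2^2 + (1645/207)*c1^2 + (-174/11)*c1^2*s2^2)*(((167/9)*c1*s1 + (-174/11)*c1*s1*c2^2)*((1964/341)*c2*s2 + (-174/11)*s1^2*c2*s2)-((1/31) + (1964/341)*c2^2 + (167/9)*s1^2 + (-174/11)*s1^2*c2^2)*((-174/11)*c1*s1*c2*s2)) + ((-174/11)*c1*s1*c2*s2)*(((167/9)*c1*s1 + (-174/11)*c1*s1*c2^2)*((1645/207)*c1*s1 + (-174/11)*c1*s1*s2^2)-((-174/11)*c1*s1*c2*s2)*((-174/11)*c1*s1*c2*s2))) = (1248850565260/5494562667) + (25225984008520/20146729779)*(c2^2) + (-102664736300/72210501)*(c2^2)^2 + (25225984008520/20146729779)*(c1^2) + (-10079437772720204/664842082707)*(c1^2)*(c2^2) + (13643055839092/794315511)*(c1^2)*(c2^2)^2 + (-102664736300/72210501)*(c1^2)^2 + (13643055839092/794315511)*(c1^2)^2*(c2^2) + (-546663456/30613)*(c1^2)^2*(c2^2)^2 := by linear_combination ((2023826720/519777) + (-75871970588/19693773)*s2^2 + (522160/2883)*s2^4 + (-365592220000/59081319)*c2^2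 + (264405601780/72210501)*c2^2*s2^2 + (15373256000/6564591)*c2^4 + (48349840/16767)*s1^2 + (-12582782/2139)*s1^2*s2^2 + (96860/341)*s1^2*s2^4 + (-909408640/173259)*s1^2*c2^2 + (400676180/70587)*s1^2*c2^2*s2^2 + (15265600/6417)*s1^2*c2^4 + (-13620369700/5717547)*c1^2 + (1241115683480/216631503)*c1^2*s2^2 + (-685613824/348843)*c1^2*s2^4 + (41010648232960/1949683527)*c1^2*c2^2 + (-2792276828752/72210501)*c1^2*c2^2*s2^2 + (-1169828116240/72210501)*c1^2*c2^4)*h1 + ((-2239402391540/610506963) + (177879800/983103)*s2^2 + (7749114001300/2238525531)*c2^2 + (50332125587120/6715576593)*c1^2 + (-23280510832/10814133)*c1^2*s2^2 + (-1004035988181692/24623780841)*c1^2*c2^2 + (-275636288900/72210501)*c1^4 + (7167640/3751)*c1^4*s2^2 + (30417695856/949003)*c1^4*c2^2)*h2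
    rw [e]; exact red4 _ _ ha0 ha1 hb0 hb1
lemma qform_nonneg (c1 s1 c2 s2 x0 x1 x2 x3 : ℝ) (h1 : c1^2 + s1^2 = 1) (h2 : c2^2 + s2^2 = 1) :
    0 ≤ ((1) + (-30/31)*c2^2 + (167/9)*c1^2 + (-174/11)*c1^2*c2^2)*x0^2 + ((176/9) + (-30/31)*s2^2 + (1645/207)*c1^2 + (-174/11)*c1^2*s2^2)*x1^2 + ((1/31) + (1964/341)*c2^2 + (167/9)*s1^2 + (-174/11)*s1^2*c2^2)*x2^2 + ((8500/3069) + (1964/341)*s2^2 + (1645/207)*s1^2 + (-174/11)*s1^2*s2^2)*x3^2 + 2*(((-30/31)*c2*s2 + (-174/11)*c1^2*c2*s2)*x0*x1 + ((167/9)*c1*s1 + (-174/11)*c1*s1*c2^2)*x0*x2 + ((-174/11)*c1*s1*c2*s2)*x0*x3 + ((-174/11)*c1*s1*c2*s2)*x1*x2 + ((1645/207)*c1*s1 + (-174/11)*c1*s1*s2^2)*x1*x3 + ((1964/341)*c2*s2 + (-174/11)*s1^2*c2*s2)*x2*x3) := by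
  by_cases hx : x0 = 0 ∧ x1 = 0 ∧ x2 = 0 ∧ x3 = 0
  · obtain ⟨e0, e1, e2, e3⟩ := hx
    rw [e0, e1, e2, e3]
    exact le_of_eq (by ring)
  · exact (qform_pos c1 s1 c2 s2 x0 x1 x2 x3 h1 h2 hx).le

lemma coef1 : (-30/31 : ℂ) = ((-30/31 : ℝ) : ℂ) := by norm_num
lemma coef2 : (167/9 : ℂ) = ((167/9 : ℝ) : ℂ) := by norm_num
lemma coef3 : (-174/11 : ℂ) = ((-174/11 : ℝ) : ℂ) := by norm_num
lemma coef4 : (-244/23 : ℂ) = ((-244/23 : ℝ) : ℂ) := by norm_num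
lemma coef5 : (74/11 : ℂ) = ((74/11 : ℝ) : ℂ) := by norm_num

lemma bell_val (θ₁ θ₂ : ℝ) (x : Fin 2 × Fin 2 → ℂ) :
    star x ⬝ᵥ ((BellOp θ₁ θ₂ + 1) *ᵥ x) =
      (((((1) + (-30/31)*(Real.cos θ₂)^2 + (167/9)*(Real.cos θ₁)^2 + (-174/11)*(Real.cos θ₁)^2*(Real.cos θ₂)^2)*((x (0,0)).re)^2 + ((176/9) + (-30/31)*(Real.sin θ₂)^2 + (1645/207)*(Real.cos θ₁)^2 + (-174/11)*(Real.cos θ₁)^2*(Real.sin θ₂)^2)*((x (0,1)).re)^2 + ((1/31) + (1964/341)*(Real.cos θ₂)^2 + (167/9)*(Real.sin θ₁)^2 + (-174/11)*(Real.sin θ₁)^2*(Real.cos θ₂)^2)*((x (1,0)).re)^2 + ((8500/3069) + (1964/341)*(Real.sin θ₂)^2 + (1645/207)*(Real.sin θ₁)^2 + (-174/11)*(Real.sin θ₁)^2*(Real.sin θ₂)^2)*((x (1,1)).re)^2 + 2*(((-30/31)*(Real.cos θ₂)*(Real.sin θ₂) + (-174/11)*(Real.cos θ₁)^2*(Real.cos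 θ₂)*(Real.sin θ₂))*((x (0,0)).re)*((x (0,1)).re) + ((167/9)*(Real.cos θ₁)*(Real.sin θ₁) + (-174/11)*(Real.cos θ₁)*(Real.sin θ₁)*(Real.cos θ₂)^2)*((x (0,0)).re)*((x (1,0)).re) + ((-174/11)*(Real.cos θ₁)*(Real.sin θ₁)*(Real.cos θ₂)*(Real.sin θ₂))*((x (0,0)).re)*((x (1,1)).re) + ((-174/11)*(Real.cos θ₁)*(Real.sin θ₁)*(Real.cos θ₂)*(Real.sin θ₂))*((x (0,1)).re)*((x (1,0)).re) + ((1645/207)*(Real.cos θ₁)*(Real.sin θ₁) + (-174/11)*(Real.cos θ₁)*(Real.sin θ₁)*(Real.sin θ₂)^2)*((x (0,1)).re)*((x (1,1)).re) + ((1964/341)*(Real.cos θ₂)*(Real.sin θ₂) + (-174/11)*(Real.sin θ₁)^2*(Real.cos θ₂)*(Real.sin θ₂))*((x (1,0)).re)*((x (1,1)).re))) + (((1) + (-30/31)*(Real.cos θ₂)^2 + (167/9)*(Real.cos θ₁)^2 + (-174/11)*(Real.cos θ₁)^2*(Real.cos θ₂)^2)*((x (0,0)).im)^2 + ((176/9)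 + (-30/31)*(Real.sin θ₂)^2 + (1645/207)*(Real.cos θ₁)^2 + (-174/11)*(Real.cos θ₁)^2*(Real.sin θ₂)^2)*((x (0,1)).im)^2 + ((1/31) + (1964/341)*(Real.cos θ₂)^2 + (167/9)*(Real.sin θ₁)^2 + (-174/11)*(Real.sin θ₁)^2*(Real.cos θ₂)^2)*((x (1,0)).im)^2 + ((8500/3069) + (1964/341)*(Real.sin θ₂)^2 + (1645/207)*(Real.sin θ₁)^2 + (-174/11)*(Real.sin θ₁)^2*(Real.sin θ₂)^2)*((x (1,1)).im)^2 + 2*(((-30/31)*(Real.cos θ₂)*(Real.sin θ₂) + (-174/11)*(Real.cos θ₁)^2*(Real.cos θ₂)*(Real.sin θ₂))*((x (0,0)).im)*((x (0,1)).im) + ((167/9)*(Real.cos θ₁)*(Real.sin θ₁) + (-174/11)*(Real.cos θ₁)*(Real.sin θ₁)*(Real.cos θ₂)^2)*((x (0,0)).im)*((x (1,0)).im) + ((-174/11)*(Real.cos θ₁)*(Real.sin θ₁)*(Real.cos θ₂)*(Real.sin θ₂))*((x (0,0)).im)*((x (1,1)).im) + ((-174/11)*(Real.cos θ₁)*(Real.sin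 θ₁)*(Real.cos θ₂)*(Real.sin θ₂))*((x (0,1)).im)*((x (1,0)).im) + ((1645/207)*(Real.cos θ₁)*(Real.sin θ₁) + (-174/11)*(Real.cos θ₁)*(Real.sin θ₁)*(Real.sin θ₂)^2)*((x (0,1)).im)*((x (1,1)).im) + ((1964/341)*(Real.cos θ₂)*(Real.sin θ₂) + (-174/11)*(Real.sin θ₁)^2*(Real.cos θ₂)*(Real.sin θ₂))*((x (1,0)).im)*((x (1,1)).im))) : ℝ) : ℂ) := by
  simp only [BellOp]
  rw [coef1, coef2, coef3, coef4, coef5]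
  apply Complex.ext <;>
  · simp [dotProduct, Matrix.mulVec, Matrix.mul_apply, Matrix.one_apply, E1, E1', E2, E2', ketOneProj, psiProj, Fintype.sum_prod_type, Fin.sum_univ_two, Matrix.add_apply, Matrix.smul_apply, Prod.mk.injEq, Prod.ext_iff, smul_eq_mul, ← Complex.ofReal_pow, -Complex.ofReal_cos, -Complex.ofReal_sin, map_pow, Complex.conj_ofReal]
    try ring


lemma bell_quad_pos (θ₁ θ₂ : ℝ) (x : Fin 2 × Fin 2 → ℂ) (hx : x ≠ 0) :
    0 < star x ⬝ᵥ ((BellOp θ₁ θ₂ + 1) *ᵥ x) := by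
  have h1 : (Real.cos θ₁)^2 + (Real.sin θ₁)^2 = 1 := by
    have := Real.sin_sq_add_cos_sq θ₁; linarith
  have h2 : (Real.cos θ₂)^2 + (Real.sin θ₂)^2 = 1 := by
    have := Real.sin_sq_add_cos_sq θ₂; linarith
  rw [bell_val θ₁ θ₂ x, Complex.zero_lt_real]
  have hnu := qform_nonneg (Real.cos θ₁) (Real.sin θ₁) (Real.cos θ₂) (Real.sin θ₂)
    ((x (0,0)).re) ((x (0,1)).re) ((x (1,0)).re) ((x (1,1)).re) h1 h2
  have hnv := qform_nonneg (Real.cos θ₁) (Real.sin θ₁) (Real.cos θ₂) (Real.sin θ₂)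
    ((x (0,0)).im) ((x (0,1)).im) ((x (1,0)).im) ((x (1,1)).im) h1 h2
  by_cases hu : (x (0,0)).re = 0 ∧ (x (0,1)).re = 0 ∧ (x (1,0)).re = 0 ∧ (x (1,1)).re = 0
  · have hv : ¬((x (0,0)).im = 0 ∧ (x (0,1)).im = 0 ∧ (x (1,0)).im = 0 ∧ (x (1,1)).im = 0) := by
      intro hv
      apply hx
      funext i
      have : ∀ j : Fin 2 × Fin 2, j = (0,0) ∨ j = (0,1) ∨ j = (1,0) ∨ j = (1,1) := by decide
      rcases this i with h | h | h | h <;> subst h <;>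
        exact Complex.ext (by tauto) (by tauto)
    have hpv := qform_pos (Real.cos θ₁) (Real.sin θ₁) (Real.cos θ₂) (Real.sin θ₂)
      ((x (0,0)).im) ((x (0,1)).im) ((x (1,0)).im) ((x (1,1)).im) h1 h2 hv
    linarith
  · have hpu := qform_pos (Real.cos θ₁) (Real.sin θ₁) (Real.cos θ₂) (Real.sin θ₂)
      ((x (0,0)).re) ((x (0,1)).re) ((x (1,0)).re) ((x (1,1)).re) h1 h2 hu
    linarith

lemma bell_herm (θ₁ θ₂ : ℝ) : (BellOp θ₁ θ₂ + 1).IsHermitian := by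
  have : (BellOp θ₁ θ₂ + 1)ᴴ = BellOp θ₁ θ₂ + 1 := by
    simp only [BellOp]
    rw [coef1, coef2, coef3, coef4, coef5]
    ext i j
    rw [Matrix.conjTranspose_apply]
    fin_cases i <;> fin_cases j <;>
    · simp [dotProduct, Matrix.mulVec, Matrix.mul_apply, Matrix.one_apply, E1, E1', E2, E2', ketOneProj, psiProj, Fintype.sum_prod_type, Fin.sum_univ_two, Matrix.add_apply, Matrix.smul_apply, Prod.mk.injEq, Prod.ext_iff, smul_eq_mul, Complex.ext_iff, -Complex.ofReal_cos, -Complex.ofReal_sin, map_pow, Complex.conj_ofReal]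
      try constructor <;> ring
  exact this

/-- for all angles `θ₁, θ₂`, the Bell operator satisfies `M(θ₁,θ₂) + 1 > 0`
(positive definite); consequently, for every normalized two-qubit state `φ`, the value of
the Bell functional `B(p̄) = ⟨φ|M(θ₁,θ₂)|φ⟩` on the distribution generated by the
projectors `E₁, E₁', E₂, E₂'` exceeds `−1`. -/
theorem bell_operator_quantum_bound :
    ∀ θ₁ θ₂ : ℝ,
      (BellOp θ₁ θ₂ + 1).PosDef ∧
        ∀ φ : EuclideanSpace ℂ (Fin 2 × Fin 2), ‖φ‖ = 1 →
          -1 < ((inner ℂ φ ((Matrix.toEuclideanLin (BellOp θ₁ θ₂)) φ) : ℂ)).re := by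
  intro θ₁ θ₂
  have hpd : (BellOp θ₁ θ₂ + 1).PosDef := Matrix.posDef_iff_dotProduct_mulVec.mpr
    ⟨bell_herm θ₁ θ₂, fun x hx => bell_quad_pos θ₁ θ₂ x hx⟩
  refine ⟨hpd, ?_⟩
  intro φ hφ
  have hφne : φ ≠ 0 := by
    intro h
    rw [h] at hφ
    simp at hφ
  have hpos := (Matrix.posDef_iff_dotProduct_mulVec.mp hpd).2 (x := φ.ofLp) (by simpa using hφne)
  have hinner : (inner ℂ φ ((Matrix.toEuclideanLin (BellOp θ₁ θ₂)) φ) : ℂ)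
      = star φ.ofLp ⬝ᵥ ((BellOp θ₁ θ₂) *ᵥ φ.ofLp) := by
    rw [EuclideanSpace.inner_eq_star_dotProduct, dotProduct_comm]; rfl
  have hsplit : star φ.ofLp ⬝ᵥ ((BellOp θ₁ θ₂ + 1) *ᵥ φ.ofLp)
      = star φ.ofLp ⬝ᵥ ((BellOp θ₁ θ₂) *ᵥ φ.ofLp) + star φ.ofLp ⬝ᵥ φ.ofLp := by
    rw [Matrix.add_mulVec, Matrix.one_mulVec, dotProduct_add]
  have hnorm : (star φ.ofLp ⬝ᵥ φ.ofLp).re = 1 := by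
    have he : star φ.ofLp ⬝ᵥ φ.ofLp = (inner ℂ φ φ : ℂ) := by
      rw [EuclideanSpace.inner_eq_star_dotProduct, dotProduct_comm]
    rw [he]
    simpa [hφ] using inner_self_eq_norm_sq (𝕜 := ℂ) φ
  have hre : 0 < (star φ.ofLp ⬝ᵥ ((BellOp θ₁ θ₂ + 1) *ᵥ φ.ofLp)).re := (Complex.lt_def.mp hpos).1
  rw [hsplit] at hre
  simp only [Complex.add_re] at hre
  rw [hinner]
  linarith [hre, hnorm]
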